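/- arXiv:1305.1821 — 4 statements merged into one kernel-verified Lean document; each statement's English description precedes it below -/
import Mathlib

section
/- Let (V, +, 0) and (V, ∘, Θ) be two elementary abelian p-group structures on the same finite set V such that every +-translation σ_y : x ↦ x + y lies in the affine group AGL(V, ∘, Θ). For y ∈ V let κ(y) ∈ GL(V, ∘, Θ) be defined by x + y − Θ = xκ(y) ∘ y for all x. Then κ(y + z − Θ) = κ(y)κ(z) for all y, z ∈ V; in particular the map y ↦ κ(y + Θ) is a group homomorphism from (V, +) to GL(V, ∘, Θ), and κ(V) is an abelian p-group. -/
/-- A second elementary abelian `p`-group structure `(V, ∘, Θ)` on the underlying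
set of a finite elementary abelian `p`-group `(V, +, 0)`. -/
structure ElemAbStruct (p : ℕ) (V : Type*) where
  circ : V → V → V
  theta : V
  opp : V → V
  assoc : ∀ a b c, circ (circ a b) c = circ a (circ b c)
  comm : ∀ a b, circ a b = circ b a
  theta_right : ∀ a, circ a theta = a
  opp_right : ∀ a, circ a (opp a) = theta
  elem : ∀ a, (circ a)^[p] theta = theta

theorem circ_cancel {p : ℕ} {V : Type*} (S : ElemAbStruct p V) {a b c : V}
    (h : S.circ a c = S.circ b c) : a = b := by
  have := congrArg (fun t => S.circ t (S.opp c)) h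
  simpa [S.assoc, S.opp_right, S.theta_right] using this

/-- Suppose every `+`-translation of `V` is affine with respect to a second
elementary abelian `p`-group structure `(V, ∘, Θ)`, with `∘`-linear part
`κ(y)` satisfying `x + y - Θ = xκ(y) ∘ y`. Then `κ(y + z - Θ) = κ(y)κ(z)`; in
particular `y ↦ κ(y + Θ)` is a homomorphism from `(V,+)` and `κ(V)` is an
abelian `p`-group (all its elements have order dividing `p`). -/
theorem stmt11 {p : ℕ} (hp : p.Prime) {V : Type*} [AddCommGroup V] [Fintype V]
    (helem : ∀ v : V, p • v = 0) (S : ElemAbStruct p V)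
    (K : V → V → V)
    (hKbij : ∀ y, Function.Bijective (K y))
    (hKlin : ∀ y a b, K y (S.circ a b) = S.circ (K y a) (K y b))
    (hKdef : ∀ x y, x + y - S.theta = S.circ (K y x) y) :
    (∀ y z x, K (y + z - S.theta) x = K z (K y x)) ∧
    (∀ y z x, K z (K y x) = K y (K z x)) ∧
    (∀ y x, (K y)^[p] x = x) := by
  have hcocycle : ∀ y z x, K (y + z - S.theta) x = K z (K y x) := by
    intro y z x
    have h1 : x + (y + z - S.theta) - S.theta
        = S.circ (K (y + z - S.theta) x) (y + z - S.theta) := hKdef _ _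
    have h2 : (x + y - S.theta) + z - S.theta
        = S.circ (K z (x + y - S.theta)) z := hKdef _ _
    rw [hKdef x y, hKlin] at h2
    have hyz : S.circ (K z y) z = y + z - S.theta := (hKdef y z).symm
    have h3 : (x + y - S.theta) + z - S.theta
        = S.circ (K z (K y x)) (y + z - S.theta) := by
      rw [hKdef x y, h2, S.assoc, hyz]
    have heq : S.circ (K (y + z - S.theta) x) (y + z - S.theta)
        = S.circ (K z (K y x)) (y + z - S.theta) := by
      rw [← h1, ← h3]; abel_nf
    exact circ_cancel S heq
  have hKtheta : ∀ x, K S.theta x = x := by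
    intro x
    have := hKdef x S.theta
    rw [S.theta_right] at this
    linear_combination (norm := abel) -this
  have hiter : ∀ y x (n : ℕ),
      (K y)^[n] x = K ((n : ℤ) • y + (1 - (n : ℤ)) • S.theta) x := by
    intro y x n
    induction n with
    | zero => simp [hKtheta]
    | succ n ih =>
      have := hcocycle ((n : ℤ) • y + (1 - (n : ℤ)) • S.theta) y x
      have harg : (n : ℤ) • y + (1 - (n : ℤ)) • S.theta + y - S.theta
          = ((n : ℤ) + 1) • y + (1 - ((n : ℤ) + 1)) • S.theta := by
        simp [add_zsmul, sub_zsmul, one_zsmul]; abel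
      rw [harg] at this
      rw [Function.iterate_succ_apply', ih, ← this]
      push_cast
      ring_nf
  refine ⟨hcocycle, ?_, ?_⟩
  · intro y z x
    rw [← hcocycle y z x, ← hcocycle z y x, add_comm y z]
  · intro y x
    have := hiter y x p
    have hy : (p : ℤ) • y = 0 := by
      rw [natCast_zsmul]; exact helem y
    have ht : (1 - (p : ℤ)) • S.theta = S.theta := by
      rw [sub_zsmul, one_zsmul, natCast_zsmul, helem]; abel
    rw [this, hy, ht, zero_add, hKtheta]
end

section
/- With two elementary abelian p-group structures (V,+,0) and (V,∘,Θ) on V such that every +-translation is ∘-affine, define κ(y) by x + y − Θ = xκ(y) ∘ y and write uκ(v) = u ∘ uδ(v), where δ(v) ∈ End(V,∘). Then yδ(z) = zδ(y) for all y, z ∈ V, and δ is ∘-additive: δ(v₁ ∘ v₂) = δ(v₁) ∘ δ(v₂). -/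
/-- With `κ(y)` the `∘`-linear part of the `+`-translation (so
`x + y - Θ = xκ(y) ∘ y`) and `δ(v)` the `∘`-endomorphism with
`uκ(v) = u ∘ uδ(v)`, one has `yδ(z) = zδ(y)` for all `y, z`, and `δ` is
`∘`-additive: `δ(v₁ ∘ v₂) = δ(v₁) ∘ δ(v₂)`.
Here `D v u` denotes `uδ(v)` and `K y x` denotes `xκ(y)`. -/
theorem stmt13 {p : ℕ} (hp : p.Prime) {V : Type*} [AddCommGroup V] [Fintype V]
    (helem : ∀ v : V, p • v = 0) (S : ElemAbStruct p V)
    (K : V → V → V)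
    (hKbij : ∀ y, Function.Bijective (K y))
    (hKlin : ∀ y a b, K y (S.circ a b) = S.circ (K y a) (K y b))
    (hKdef : ∀ x y, x + y - S.theta = S.circ (K y x) y)
    (D : V → V → V)
    (hKD : ∀ u v, K v u = S.circ u (D v u))
    (hDend : ∀ v a b, D v (S.circ a b) = S.circ (D v a) (D v b)) :
    (∀ y z, D z y = D y z) ∧
    (∀ v₁ v₂ u, D (S.circ v₁ v₂) u = S.circ (D v₁ u) (D v₂ u)) := by
  have cancel : ∀ a b c : V, S.circ a c = S.circ b c → a = b := by
    intro a b c h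
    have := congrArg (fun x => S.circ x (S.opp c)) h
    simpa [S.assoc, S.opp_right, S.theta_right] using this
  have key : ∀ y z, D z y = D y z := by
    intro y z
    have h1 : S.circ (S.circ y (D z y)) z = S.circ (S.circ z (D y z)) y := by
      rw [← hKD, ← hKD, ← hKdef, ← hKdef, add_comm]
    apply cancel _ _ (S.circ y z)
    calc S.circ (D z y) (S.circ y z) = S.circ (S.circ y (D z y)) z := by
          rw [S.comm y (D z y), S.assoc]
      _ = S.circ (S.circ z (D y z)) y := h1
      _ = S.circ (D y z) (S.circ y z) := by
          rw [S.comm z (D y z), S.assoc, S.comm z y]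
  exact ⟨key, fun v₁ v₂ u => by rw [key u, hDend, key v₁ u, key v₂ u]⟩
end

section
/- In the setup above, fix u ∈ V and let W = uδ(V) = {uδ(v) : v ∈ V}. Then W is a ∘-subgroup of V, W is invariant under κ(z) for all z ∈ V, and the set {uκ(v) : v ∈ V} equals the ∘-coset u ∘ W. -/
/-- Fix `u ∈ V` and let `W = uδ(V) = {uδ(v) : v ∈ V}`. Then `W` is a
`∘`-subgroup of `V`, `W` is invariant under every `κ(z)`, and
`{uκ(v) : v ∈ V}` is the `∘`-coset `u ∘ W`.
Here `D v u` denotes `uδ(v)` and `K y x` denotes `xκ(y)`. -/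
theorem stmt14 {p : ℕ} (hp : p.Prime) {V : Type*} [AddCommGroup V] [Fintype V]
    (helem : ∀ v : V, p • v = 0) (S : ElemAbStruct p V)
    (K : V → V → V)
    (hKbij : ∀ y, Function.Bijective (K y))
    (hKlin : ∀ y a b, K y (S.circ a b) = S.circ (K y a) (K y b))
    (hKdef : ∀ x y, x + y - S.theta = S.circ (K y x) y)
    (D : V → V → V)
    (hKD : ∀ u v, K v u = S.circ u (D v u))
    (hDend : ∀ v a b, D v (S.circ a b) = S.circ (D v a) (D v b))
    (hDadd : ∀ v z u', D (v + z - S.theta) u' =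
      S.circ (S.circ (D v u') (D z u')) (D z (D v u')))
    (u : V) :
    (S.theta ∈ {w : V | ∃ v, w = D v u} ∧
      (∀ w₁ ∈ {w : V | ∃ v, w = D v u}, ∀ w₂ ∈ {w : V | ∃ v, w = D v u},
        S.circ w₁ w₂ ∈ {w : V | ∃ v, w = D v u}) ∧
      (∀ w₁ ∈ {w : V | ∃ v, w = D v u}, S.opp w₁ ∈ {w : V | ∃ v, w = D v u})) ∧
    (∀ z : V, ∀ w₁ ∈ {w : V | ∃ v, w = D v u}, K z w₁ ∈ {w : V | ∃ v, w = D v u}) ∧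
    {x : V | ∃ v, x = K v u} = {x : V | ∃ w ∈ {w : V | ∃ v, w = D v u}, x = S.circ u w} := by
  letI : CommGroup V :=
    { mul := S.circ, one := S.theta, inv := S.opp,
      mul_assoc := S.assoc, mul_comm := S.comm,
      mul_one := S.theta_right,
      one_mul := fun a => by show S.circ S.theta a = a; rw [S.comm]; exact S.theta_right a,
      inv_mul_cancel := fun a => by show S.circ (S.opp a) a = S.theta; rw [S.comm]; exact S.opp_right a }
  have hc : ∀ a b : V, S.circ a b = a * b := fun _ _ => rfl
  have ht : S.theta = (1 : V) := rfl
  have ho : ∀ a : V, S.opp a = a⁻¹ := fun _ => rfl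
  simp only [hc, ht, ho] at hKdef hKD hDend hDadd ⊢
  -- D kills the identity
  have hθ : ∀ v : V, D v 1 = 1 := by
    intro v
    have h := hDend v 1 1
    rw [one_mul] at h
    exact (mul_left_cancel (a := D v 1) (by rw [mul_one, ← h])).symm
  -- D is symmetric
  have sym : ∀ a b : V, D a b = D b a := by
    intro a b
    have h1 := hKdef a b
    rw [hKD] at h1
    have h2 := hKdef b a
    rw [hKD] at h2
    have h3 : a * D b a * b = b * D a b * a := by rw [← h1, ← h2, add_comm]
    rw [mul_right_comm a (D b a) b, mul_right_comm b (D a b) a, mul_comm b a] at h3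
    exact (mul_left_cancel h3).symm
  have hinv : ∀ z : V, D (S.opp z) u = (D z u)⁻¹ := by
    intro z
    have h : D z u * D (S.opp z) u = 1 := by
      rw [sym z u, sym (S.opp z) u, ← hDend, ho, mul_inv_cancel]
      exact hθ u
    exact eq_inv_of_mul_eq_one_left (by rw [mul_comm]; exact h)
  refine ⟨⟨⟨1, ?_⟩, ?_, ?_⟩, ?_, ?_⟩
  · -- theta ∈ W
    rw [sym, hθ]
  · -- closure under circ
    rintro w₁ ⟨v₁, rfl⟩ w₂ ⟨v₂, rfl⟩
    refine ⟨v₁ * v₂, ?_⟩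
    rw [sym v₁ u, sym v₂ u, ← hDend, sym]
  · -- closure under opp
    rintro w₁ ⟨v₁, rfl⟩
    refine ⟨S.opp v₁, ?_⟩
    exact (hinv v₁).symm
  · -- invariance under K z
    rintro z w₁ ⟨v, rfl⟩
    refine ⟨S.opp z * (v + z - 1), ?_⟩
    have e1 : K z (D v u) = D v u * D z (D v u) := hKD (D v u) z
    have e2 := hDadd v z u
    have e3 : D (S.opp z * (v + z - 1)) u = D (S.opp z) u * D (v + z - 1) u := by
      rw [sym, hDend, sym u (S.opp z), sym u (v + z - 1)]
    rw [e1, e3, hinv, e2, mul_comm (D v u) (D z u),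
      mul_assoc (D z u) (D v u) (D z (D v u)), inv_mul_cancel_left]
  · -- coset equality
    ext x
    constructor
    · rintro ⟨v, rfl⟩
      exact ⟨D v u, ⟨v, rfl⟩, hKD u v⟩
    · rintro ⟨w, ⟨v, rfl⟩, rfl⟩
      exact ⟨v, (hKD u v).symm⟩
end

section
/- Let V = V_1 ⊕ ⋯ ⊕ V_n be a direct sum of subgroups of a finite abelian group, γ a bricklayer transformation with bricks γ_i fixing 0, and U, W subgroups of V with Uγ = W. Then for each i, (U ∩ V_i)γ_i = W ∩ V_i. -/
/-- Let `V = V₁ ⊕ ⋯ ⊕ Vₙ`, `γ` a bricklayer transformation with bricks `gᵢ`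
permuting `Vᵢ` and fixing `0`, and `U, W` subgroups of `V` with `Uγ = W`. Then
for each `i`, `(U ∩ Vᵢ)γᵢ = W ∩ Vᵢ`. -/
theorem stmt19 {n : ℕ} {V : Type*} [AddCommGroup V] [Fintype V]
    (Vi : Fin n → AddSubgroup V)
    (π : V → Fin n → V)
    (hπmem : ∀ v i, π v i ∈ Vi i) (hπsum : ∀ v, v = ∑ i, π v i)
    (hπuniq : ∀ (v : V) (f : Fin n → V), (∀ i, f i ∈ Vi i) → v = ∑ i, f i → f = π v)
    (g : Fin n → V → V)
    (hgbij : ∀ i, Set.BijOn (g i) (Vi i : Set V) (Vi i : Set V))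
    (hg0 : ∀ i, g i 0 = 0)
    (U W : AddSubgroup V)
    (hUW : (fun v => ∑ i, g i (π v i)) '' (U : Set V) = (W : Set V)) :
    ∀ i : Fin n, g i '' ((U : Set V) ∩ (Vi i : Set V)) = (W : Set V) ∩ (Vi i : Set V) := by
  have hπVi : ∀ (i : Fin n) (v : V), v ∈ Vi i →
      (fun j => if j = i then v else 0) = π v := by
    intro i v hv
    apply hπuniq
    · intro j
      by_cases h : j = i <;> simp [h, hv, (Vi j).zero_mem]
    · simp [Finset.sum_ite_eq']
  intro i
  ext w
  constructor
  · rintro ⟨u, ⟨hU, hVi⟩, rfl⟩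
    have hγ : (∑ j, g j (π u j)) = g i u := by
      rw [← hπVi i u hVi]
      calc (∑ j, g j (if j = i then u else 0))
          = ∑ j, (if j = i then g i u else 0) := by
            apply Finset.sum_congr rfl
            intro j _
            by_cases h : j = i <;> simp [h, hg0]
        _ = g i u := by simp [Finset.sum_ite_eq']
    constructor
    · rw [← hUW]
      exact ⟨u, hU, hγ⟩
    · exact (hgbij i).mapsTo hVi
  · rintro ⟨hW, hVi⟩
    rw [← hUW] at hW
    obtain ⟨u, hU, hsum⟩ := hW
    simp only at hsum
    have hf : (fun j => g j (π u j)) = π w := by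
      apply hπuniq
      · intro j; exact (hgbij j).mapsTo (hπmem u j)
      · exact hsum.symm
    have hπw := hf.trans (hπVi i w hVi).symm
    have hzero : ∀ j, j ≠ i → π u j = 0 := by
      intro j hj
      have h1 : g j (π u j) = g j 0 := by
        have := congrFun hπw j
        simp [hj] at this
        rw [this, hg0 j]
      exact (hgbij j).injOn (hπmem u j) (Vi j).zero_mem h1
    have huVi : u = π u i := by
      calc u = ∑ j, π u j := hπsum u
        _ = π u i := by
          rw [Finset.sum_eq_single i]
          · intro j _ hj; exact hzero j hj
          · simp
    have hgi : g i u = w := by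
      rw [huVi]
      have := congrFun hπw i
      simp at this
      rw [← this]
    refine ⟨u, ⟨hU, ?_⟩, hgi⟩
    rw [huVi]; exact hπmem u i
end
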